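/- In a cop-win graph G of corner rank α, every vertex of corner rank k > 1 has at least one neighbor of corner rank k−1. In particular, if for some k < α there is exactly one vertex v of corner rank k, then v is adjacent to every vertex of corner rank k+1. -/

import Mathlib

namespace CopsRobbers

variable {V : Type*}

/-- The closed neighborhood of `v` within the vertex set `S` (graphs are reflexive,
so `v` itself belongs to its closed neighborhood). -/
def closedNbhd (G : SimpleGraph V) (S : Set V) (v : V) : Set V :=
  {u | u ∈ S ∧ (u = v ∨ G.Adj u v)}

/-- `v` is a strict corner of the subgraph induced on `S`: some other vertex `w ∈ S`
strictly corners `v`, i.e. `N[v] ⊊ N[w]` within `S`. -/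
def StrictCorner (G : SimpleGraph V) (S : Set V) (v : V) : Prop :=
  v ∈ S ∧ ∃ w ∈ S, w ≠ v ∧ closedNbhd G S v ⊂ closedNbhd G S w

/-- The remaining vertex sets of the corner ranking procedure (0-indexed auxiliary
version): at each step all current strict corners are removed. -/
def stageAux (G : SimpleGraph V) : ℕ → Set V
  | 0 => Set.univ
  | n + 1 => stageAux G n \ {v | StrictCorner G (stageAux G n) v}

/-- `stage G k` is the vertex set of `G^(k)` (for `k ≥ 1`), so `stage G 1 = V(G)`. -/
def stage (G : SimpleGraph V) (k : ℕ) : Set V := stageAux G (k - 1)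

/-- The corner rank of a vertex: the least `k ≥ 1` such that `v` is a strict corner
of `G^(k)`, or `G^(k)` is a clique still containing `v`; and `⊤` (that is, `∞`) if
there is no such `k`. -/
noncomputable def cornerRank (G : SimpleGraph V) (v : V) : ℕ∞ :=
  sInf {k : ℕ∞ | ∃ n : ℕ, k = (n : ℕ∞) ∧ 1 ≤ n ∧
    (StrictCorner G (stage G n) v ∨ (G.IsClique (stage G n) ∧ v ∈ stage G n))}

/-- The corner rank of a graph: the largest corner rank of a vertex. -/
noncomputable def graphRank (G : SimpleGraph V) : ℕ∞ := ⨆ v, cornerRank G v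

/-- A graph is cop-win iff every vertex has finite corner rank. -/
def CopWin (G : SimpleGraph V) : Prop := ∀ v, cornerRank G v ≠ ⊤

/-- `v` dominates the set `S`: `v` is (reflexively) adjacent to every vertex of `S`. -/
def Dominates (G : SimpleGraph V) (v : V) (S : Set V) : Prop :=
  ∀ u ∈ S, u = v ∨ G.Adj v u

/-- A cop-win graph of corner rank `α ≥ 2` is `tp1` if some vertex of corner rank `α`
dominates the vertex set of `G^(α-1)`. -/
def Tp1 (G : SimpleGraph V) : Prop :=
  ∃ α : ℕ, 2 ≤ α ∧ graphRank G = (α : ℕ∞) ∧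
    ∃ v, cornerRank G v = (α : ℕ∞) ∧ Dominates G v (stage G (α - 1))

/-- `G` realizes the vector `(x_α, …, x_1)` (written as the list `[x_α, …, x_1]`):
`G` is cop-win of corner rank `α` and for each `k`, `x_k` is the number of vertices
of corner rank `k`. -/
def Realizes (G : SimpleGraph V) (x : List ℕ) : Prop :=
  CopWin G ∧ graphRank G = (x.length : ℕ∞) ∧
  ∀ i : Fin x.length,
    x.get i = {v | cornerRank G v = ((x.length - (i : ℕ) : ℕ) : ℕ∞)}.ncard

/-- `G` r-realizes `x` (for `r ∈ {0,1}`): `G` realizes `x` and `G` is tp-r. -/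
def RRealizes (G : SimpleGraph V) (r : ℕ) (x : List ℕ) : Prop :=
  Realizes G x ∧ (Tp1 G ↔ r = 1)

/-- A vector is realizable if it is the rank cardinality vector of some finite cop-win graph. -/
def Realizable (x : List ℕ) : Prop :=
  ∃ (W : Type) (_ : Fintype W) (G : SimpleGraph W), Realizes G x

/-- A vector is r-realizable if some finite tp-r cop-win graph realizes it. -/
def RRealizable (r : ℕ) (x : List ℕ) : Prop :=
  ∃ (W : Type) (_ : Fintype W) (G : SimpleGraph W), RRealizes G r x

open Classical in
/-- The capture time of a cop-win graph: `cr(G) - r(G)`. -/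
noncomputable def captureTime (G : SimpleGraph V) : ℕ :=
  (graphRank G).toNat - (if Tp1 G then 1 else 0)

end CopsRobbers

namespace CopsRobbers

section Aux

variable {V : Type*} {G : SimpleGraph V} {S T : Set V} {v w : V}

lemma closedNbhd_eq_of_isClique (h : G.IsClique S) (hv : v ∈ S) :
    closedNbhd G S v = S := by
  apply Set.Subset.antisymm (fun u hu => hu.1)
  intro u hu
  refine ⟨hu, ?_⟩
  by_cases huv : u = v
  · exact Or.inl huv
  · exact Or.inr (h hu hv huv)

lemma not_strictCorner_of_isClique (h : G.IsClique S) :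
    ¬ StrictCorner G S v := by
  rintro ⟨hv, w, hw, hwv, hss⟩
  rw [closedNbhd_eq_of_isClique h hv, closedNbhd_eq_of_isClique h hw] at hss
  exact hss.ne rfl

lemma stageAux_antitone : Antitone (stageAux G) := by
  apply antitone_nat_of_succ_le
  intro n
  exact Set.diff_subset

lemma stage_subset {m n : ℕ} (h : m ≤ n) : stage G n ⊆ stage G m :=
  stageAux_antitone (Nat.sub_le_sub_right h 1)

lemma cornerRank_le {n : ℕ} (hn : 1 ≤ n)
    (h : StrictCorner G (stage G n) v ∨ (G.IsClique (stage G n) ∧ v ∈ stage G n)) :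
    cornerRank G v ≤ (n : ℕ∞) :=
  sInf_le ⟨n, rfl, hn, h⟩

lemma enat_sInf_mem {A : Set ℕ∞} {k : ℕ} (h : sInf A = (k : ℕ∞)) : (k : ℕ∞) ∈ A := by
  by_contra hk
  have : (k : ℕ∞) + 1 ≤ sInf A := by
    apply le_sInf
    intro b hb
    have hkb : (k : ℕ∞) < b := by
      rcases lt_or_eq_of_le (h ▸ sInf_le hb) with h' | h'
      · exact h'
      · exact absurd (h' ▸ hb) hk
    exact (ENat.add_one_le_iff (by simp)).2 hkb
  rw [h] at this
  exact lt_irrefl _ ((ENat.add_one_le_iff (by simp)).1 this)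

lemma cond_of_cornerRank_eq {k : ℕ} (h : cornerRank G v = (k : ℕ∞)) :
    1 ≤ k ∧ (StrictCorner G (stage G k) v ∨ (G.IsClique (stage G k) ∧ v ∈ stage G k)) := by
  obtain ⟨n, hn, h1, hcond⟩ := enat_sInf_mem h
  have : n = k := by exact_mod_cast hn.symm
  subst this
  exact ⟨h1, hcond⟩

lemma not_cond_of_lt {k n : ℕ} (h : cornerRank G v = (k : ℕ∞)) (h1 : 1 ≤ n) (h2 : n < k) :
    ¬ (StrictCorner G (stage G n) v ∨ (G.IsClique (stage G n) ∧ v ∈ stage G n)) := by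
  intro hc
  have := cornerRank_le h1 hc
  rw [h] at this
  exact absurd (by exact_mod_cast this) (not_le.2 h2)

lemma mem_stageAux_of_not_strictCorner {j : ℕ}
    (h : ∀ n, 1 ≤ n → n ≤ j → ¬ StrictCorner G (stage G n) v) : v ∈ stageAux G j := by
  induction j with
  | zero => exact Set.mem_univ v
  | succ j ih =>
    refine ⟨ih (fun n h1 h2 => h n h1 (h2.trans (Nat.le_succ j))), ?_⟩
    intro hc
    exact h (j + 1) (Nat.succ_le_succ (Nat.zero_le j)) le_rfl hc

lemma mem_stage_of_cornerRank_eq {k : ℕ} (h : cornerRank G v = (k : ℕ∞)) :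
    v ∈ stage G k := by
  have h1 := (cond_of_cornerRank_eq h).1
  apply mem_stageAux_of_not_strictCorner
  intro n hn1 hn2
  intro hc
  exact not_cond_of_lt h hn1 (by omega) (Or.inl hc)

lemma cornerRank_eq_of_strictCorner {m : ℕ} (hm : 1 ≤ m)
    (h : StrictCorner G (stage G m) v) : cornerRank G v = (m : ℕ∞) := by
  refine le_antisymm (cornerRank_le hm (Or.inl h)) (le_sInf ?_)
  rintro b ⟨n, rfl, hn1, hcond⟩
  by_contra hb
  push_neg at hb
  have hnm : n < m := by exact_mod_cast hb
  rcases hcond with hsc | ⟨hcl, _⟩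
  · -- v is a strict corner of stage n, so v ∉ stageAux n = stage (n+1) ⊇ stage m
    have hv : v ∈ stage G m := h.1
    have hsub : stage G m ⊆ stage G (n + 1) := stage_subset (by omega)
    have hvn1 : v ∈ stage G (n + 1) := hsub hv
    have : stage G (n + 1) = stageAux G ((n - 1) + 1) := by
      show stageAux G (n + 1 - 1) = _
      rw [show n + 1 - 1 = (n - 1) + 1 by omega]
    rw [this] at hvn1
    have hn' : stageAux G (n - 1) = stage G n := rfl
    exact hvn1.2 (by rw [hn']; exact hsc)
  · -- stage n is a clique, hence so is stage m, contradicting the strict corner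
    have hsub : stage G m ⊆ stage G n := stage_subset (le_of_lt hnm)
    exact not_strictCorner_of_isClique (hcl.subset hsub) h

lemma closedNbhd_inter (hTS : T ⊆ S) (x : V) :
    closedNbhd G T x = closedNbhd G S x ∩ T := by
  ext u
  simp only [closedNbhd, Set.mem_setOf_eq, Set.mem_inter_iff]
  constructor
  · rintro ⟨hu, h⟩; exact ⟨⟨hTS hu, h⟩, hu⟩
  · rintro ⟨⟨_, h⟩, hu⟩; exact ⟨hu, h⟩

/-- Main lemma: a vertex of corner rank `k > 1` has a neighbor of corner rank `k - 1`. -/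
lemma exists_neighbor_of_rank {V : Type} [Fintype V] {G : SimpleGraph V} {k : ℕ} {v : V}
    (hk : 1 < k) (hv : cornerRank G v = (k : ℕ∞)) :
    ∃ u, G.Adj v u ∧ cornerRank G u = ((k - 1 : ℕ) : ℕ∞) := by
  set S := stage G (k - 1) with hS
  set T := stage G k with hT
  have hTS : T ⊆ S := stage_subset (by omega)
  have hvT : v ∈ T := mem_stage_of_cornerRank_eq hv
  have hvS : v ∈ S := hTS hvT
  have hnotC := not_cond_of_lt hv (n := k - 1) (by omega) (by omega)
  push_neg at hnotC
  obtain ⟨hvSC, hScl⟩ := hnotC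
  have hSclique : ¬ G.IsClique S := fun h => hScl h hvS
  have hTdef : T = S \ {x | StrictCorner G S x} := by
    have h1 : k - 1 = (k - 2) + 1 := by omega
    have h2 : stageAux G (k - 2) = S := rfl
    rw [hT]
    unfold stage
    rw [h1, stageAux]
    rw [h2]
  -- it suffices to find a neighbor of v which is a strict corner of S
  suffices hsuf : ∃ u, G.Adj v u ∧ StrictCorner G S u by
    obtain ⟨u, hadj, hSC⟩ := hsuf
    exact ⟨u, hadj, cornerRank_eq_of_strictCorner (by omega) hSC⟩
  have hcond := (cond_of_cornerRank_eq hv).2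
  by_cases hA : StrictCorner G T v
  · -- Case A: v is a strict corner of stage k
    obtain ⟨hvT', w, hwT, hwv, hss⟩ := hA
    have hwS : w ∈ S := hTS hwT
    have hNvw : ¬ closedNbhd G S v ⊂ closedNbhd G S w :=
      fun hc => hvSC ⟨hvS, w, hwS, hwv, hc⟩
    have hvNTw : v ∈ closedNbhd G T w := hss.subset ⟨hvT, Or.inl rfl⟩
    by_cases hsub : closedNbhd G S v ⊆ closedNbhd G S w
    · rcases hsub.ssubset_or_eq with h' | h'
      · exact absurd h' hNvw
      · exfalso
        apply hss.ne
        rw [closedNbhd_inter hTS v, closedNbhd_inter hTS w, h']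
    · rw [Set.not_subset] at hsub
      obtain ⟨u, huNv, huNw⟩ := hsub
      obtain ⟨huS, hu⟩ := huNv
      have huv : u ≠ v := by
        rintro rfl
        exact huNw ⟨hTS hvNTw.1, hvNTw.2⟩
      have hadj : G.Adj u v := hu.resolve_left huv
      have huT : u ∉ T := by
        intro huT
        exact huNw ((closedNbhd_inter hTS w ▸ hss.subset) ⟨huT, Or.inr hadj⟩).1
      have : u ∈ S \ T := ⟨huS, huT⟩
      rw [hTdef] at this
      have huSC : StrictCorner G S u := by
        by_contra hn
        exact huT (hTdef ▸ ⟨huS, hn⟩)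
      exact ⟨u, hadj.symm, huSC⟩
  · -- Case B: stage k is a clique containing v
    have hTcl : G.IsClique T ∧ v ∈ T := hcond.resolve_left hA
    obtain ⟨hTclique, _⟩ := hTcl
    by_contra hno
    push_neg at hno
    -- every vertex of S \ T is a strict corner of S, none adjacent to v
    have hcornerST : ∀ x ∈ S, x ∉ T → StrictCorner G S x := by
      intro x hxS hxT
      by_contra hn
      exact hxT (hTdef ▸ ⟨hxS, hn⟩)
    have hNvT : closedNbhd G S v ⊆ T := by
      rintro u ⟨huS, hu⟩
      rcases hu with rfl | hadj
      · exact hvT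
      · by_contra huT
        exact hno u hadj.symm (hcornerST u huS huT)
    have hSTne : ∃ z, z ∈ S \ T := by
      by_contra hn
      push_neg at hn
      apply hSclique
      have : S ⊆ T := fun x hx => by
        by_contra hxT
        exact (hn x) ⟨hx, hxT⟩
      exact hTclique.subset this
    obtain ⟨z0, hz0⟩ := hSTne
    obtain ⟨z, hzST, hzmax⟩ := Set.Finite.exists_maximalFor (closedNbhd G S) (S \ T)
      (Set.toFinite _) ⟨z0, hz0⟩
    obtain ⟨hzS, hzT⟩ := hzST
    obtain ⟨_, w, hwS, hwz, hzw⟩ := hcornerST z hzS hzT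
    have hwT : w ∈ T := by
      by_contra hwT
      exact hzw.2 (hzmax (j := w) ⟨hwS, hwT⟩ hzw.subset)
    have hNwT : closedNbhd G S w ⊆ T := by
      by_cases hwv : w = v
      · exact hwv ▸ hNvT
      · have hTNw : T ⊆ closedNbhd G S w := by
          intro y hyT
          refine ⟨hTS hyT, ?_⟩
          by_cases hyw : y = w
          · exact Or.inl hyw
          · exact Or.inr (hTclique hyT hwT hyw)
        have hsub : closedNbhd G S v ⊆ closedNbhd G S w := hNvT.trans hTNw
        rcases hsub.ssubset_or_eq with h' | h'
        · exact absurd ⟨hvS, w, hwS, hwv, h'⟩ hvSC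
        · exact h' ▸ hNvT
    exact hzT (hNwT (hzw.subset ⟨hzS, Or.inl rfl⟩))

end Aux

end CopsRobbers
/-- in a cop-win graph of corner rank `α`, every vertex of corner rank
`k > 1` has a neighbor of corner rank `k - 1`; in particular, if for some `k < α`
there is exactly one vertex `v` of corner rank `k`, then `v` is adjacent to every
vertex of corner rank `k + 1`. -/
theorem CopsRobbers.neighbor_of_rank_pred
    {V : Type} [Fintype V] (G : SimpleGraph V) (α : ℕ)
    (hG : CopsRobbers.CopWin G) (hα : CopsRobbers.graphRank G = (α : ℕ∞)) :
    (∀ (k : ℕ) (v : V), 1 < k → CopsRobbers.cornerRank G v = (k : ℕ∞) →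
      ∃ u, G.Adj v u ∧ CopsRobbers.cornerRank G u = ((k - 1 : ℕ) : ℕ∞)) ∧
    (∀ (k : ℕ) (v : V), k < α →
      {u | CopsRobbers.cornerRank G u = (k : ℕ∞)} = {v} →
      ∀ u, CopsRobbers.cornerRank G u = ((k + 1 : ℕ) : ℕ∞) → G.Adj v u) := by
  constructor
  · intro k v hk hv
    exact CopsRobbers.exists_neighbor_of_rank hk hv
  · intro k v hkα hset u hu
    rcases Nat.eq_zero_or_pos k with rfl | hk
    · -- k = 0 is impossible: no vertex has corner rank 0
      exfalso
      have hv : CopsRobbers.cornerRank G v = ((0 : ℕ) : ℕ∞) := by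
        have : v ∈ ({v} : Set V) := rfl
        rw [← hset] at this
        exact_mod_cast this
      exact absurd (CopsRobbers.cond_of_cornerRank_eq hv).1 (by omega)
    · obtain ⟨w, hadj, hw⟩ := CopsRobbers.exists_neighbor_of_rank
        (k := k + 1) (v := u) (by omega) hu
      have hwk : CopsRobbers.cornerRank G w = (k : ℕ∞) := by
        rwa [Nat.add_sub_cancel] at hw
      have : w ∈ {u | CopsRobbers.cornerRank G u = (k : ℕ∞)} := hwk
      rw [hset] at this
      rw [Set.mem_singleton_iff] at this
      subst this
      exact hadj.symm
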